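/- arXiv:2003.11270 — 3 statements merged into one kernel-verified Lean document; each statement's English description precedes it below -/
import Mathlib

section
/- Let G be a graph with Gallai–Edmonds decomposition (D; A; C), where D = {v : ν(G - v) = ν(G)}, A = N_G(D), C = V \ (D ∪ A). If e is a pair of vertices both lying in A, or with one endpoint in A and one in C, then G + e and G - e have the same Gallai–Edmonds decomposition as G (same sets D, A, C and same connected components of the induced subgraph on D). -/
set_option linter.unusedSectionVars false

attribute [local instance] Classical.propDecidable

variable {V : Type} [Fintype V] [DecidableEq V]

/-- A matching in a simple graph `G`: a finite set of edges of `G`, pairwise vertex-disjoint. -/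
def IsGMatching (G : SimpleGraph V) (M : Finset (Sym2 V)) : Prop :=
  (∀ e ∈ M, e ∈ G.edgeSet) ∧ ∀ e ∈ M, ∀ f ∈ M, e ≠ f → ∀ v, v ∈ e → v ∉ f

/-- The matching number `ν(G)` of a simple graph. -/
noncomputable def gnu (G : SimpleGraph V) : ℕ :=
  ((Finset.univ : Finset (Sym2 V)).powerset.filter fun M => IsGMatching G M).sup Finset.card

/-- The graph `G - v`: delete the vertex `v` (i.e. all edges incident to it). -/
def delV (G : SimpleGraph V) (v : V) : SimpleGraph V where
  Adj x y := G.Adj x y ∧ x ≠ v ∧ y ≠ v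
  symm := ⟨fun _ _ ⟨h, hx, hy⟩ => ⟨h.symm, hy, hx⟩⟩
  loopless := ⟨fun x h => G.loopless.irrefl x h.1⟩

/-- The Gallai–Edmonds set `D(G) = {v : ν(G - v) = ν(G)}`. -/
def Dset (G : SimpleGraph V) : Set V := {v | gnu (delV G v) = gnu G}

/-- The Gallai–Edmonds set `A(G) = N_G(D(G))`. -/
def Aset (G : SimpleGraph V) : Set V := {w | w ∉ Dset G ∧ ∃ d ∈ Dset G, G.Adj w d}

/-- The Gallai–Edmonds set `C(G) = V \ (D(G) ∪ A(G))`. -/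
def Cset (G : SimpleGraph V) : Set V := (Dset G ∪ Aset G)ᶜ

/-- Reachability inside the induced subgraph `G[S]` (same component of `G[S]`). -/
def reachOn (G : SimpleGraph V) (S : Set V) : V → V → Prop :=
  Relation.ReflTransGen fun a b => G.Adj a b ∧ a ∈ S ∧ b ∈ S

/-! ### Auxiliary development: matchings and alternating walks -/

namespace GEaux

/-- Pairwise-disjointness part of being a matching. -/
def PM (M : Finset (Sym2 V)) : Prop := ∀ e ∈ M, ∀ f ∈ M, e ≠ f → ∀ v, v ∈ e → v ∉ f

/-- `v` is saturated (covered) by the edge set `M`. -/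
def msat (M : Finset (Sym2 V)) (v : V) : Prop := ∃ e ∈ M, v ∈ e

lemma pm_mono {M M' : Finset (Sym2 V)} (h : PM M) (hsub : M' ⊆ M) : PM M' :=
  fun e he f hf hne => h e (hsub he) f (hsub hf) hne

lemma pm_eq {M : Finset (Sym2 V)} (h : PM M) {e f : Sym2 V} (he : e ∈ M) (hf : f ∈ M)
    {x : V} (hx : x ∈ e) (hx' : x ∈ f) : e = f := by
  by_contra hne
  exact h e he f hf hne x hx hx'

/-- The edges of a walk `z :: l`. -/
def pedges : V → List V → Finset (Sym2 V)
  | _, [] => ∅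
  | x, y :: l => insert s(x, y) (pedges y l)

/-- Alternating walk: consecutive edges alternately in `A` then `B` then `A` …,
starting with an `A`-edge. -/
inductive Alt : Finset (Sym2 V) → Finset (Sym2 V) → V → List V → Prop
  | nil (A B : Finset (Sym2 V)) (x : V) : Alt A B x []
  | cons {A B : Finset (Sym2 V)} {x y : V} {l : List V} (he : s(x, y) ∈ A)
      (ht : Alt B A y l) : Alt A B x (y :: l)

/-- The walk is maximal at its far end: the end vertex has no edge of the expected type. -/
def Ended (A B : Finset (Sym2 V)) (z : V) (l : List V) : Prop :=
  ¬ msat (if Even l.length then A else B) (l.getLastD z)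

lemma ended_nil {A B : Finset (Sym2 V)} {z : V} : Ended A B z [] ↔ ¬ msat A z := by
  simp [Ended]

lemma ended_cons {A B : Finset (Sym2 V)} {z y : V} {l : List V} :
    Ended A B z (y :: l) ↔ Ended B A y l := by
  unfold Ended
  rw [List.getLastD_cons]
  by_cases h : Even l.length <;> simp [Nat.even_add_one, h]

lemma pedges_mem : ∀ {z : V} {l : List V} {e : Sym2 V}, e ∈ pedges z l → ∀ x ∈ e, x ∈ z :: l := by
  intro z l
  induction l generalizing z with
  | nil => simp [pedges]
  | cons y l ih =>
    intro e he x hx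
    rcases Finset.mem_insert.mp he with rfl | he'
    · rcases Sym2.mem_iff.mp hx with rfl | rfl <;> simp
    · have := ih he' x hx
      simp only [List.mem_cons] at this ⊢
      tauto

lemma pedges_sub {A B : Finset (Sym2 V)} {z : V} {l : List V} (h : Alt A B z l) :
    pedges z l ⊆ A ∪ B := by
  induction h with
  | nil => simp [pedges]
  | cons he ht ih =>
    intro e he'
    rcases Finset.mem_insert.mp he' with rfl | he''
    · exact Finset.mem_union_left _ (by assumption)
    · rw [Finset.union_comm]; exact ih he''

lemma alt_mono {A B A' B' : Finset (Sym2 V)} {z : V} {l : List V} (h : Alt A B z l)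
    (hA : A ⊆ A') (hB : B ⊆ B') : Alt A' B' z l := by
  induction h generalizing A' B' with
  | nil => exact Alt.nil _ _ _
  | cons he ht ih => exact Alt.cons (hA he) (ih hB hA)

lemma visit_sat {A B : Finset (Sym2 V)} {z : V} {l : List V} (h : Alt A B z l) :
    ∀ y ∈ l, msat (A ∪ B) y := by
  induction h with
  | nil => simp
  | cons he ht ih =>
    intro y' hy'
    rcases List.mem_cons.mp hy' with rfl | hy''
    · exact ⟨_, Finset.mem_union_left _ he, by simp⟩
    · obtain ⟨e, he', hye⟩ := ih y' hy''
      exact ⟨e, by rwa [Finset.union_comm], hye⟩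

lemma inc_z {A B : Finset (Sym2 V)} {z : V} {l : List V} (h : Alt A B z l) (hz : z ∉ l) :
    ∀ f ∈ pedges z l, z ∈ f → ∃ y l', l = y :: l' ∧ f = s(z, y) := by
  cases h with
  | nil => simp [pedges]
  | cons he ht =>
    intro f hf hzf
    rcases Finset.mem_insert.mp hf with rfl | hf'
    · exact ⟨_, _, rfl, rfl⟩
    · exact absurd (pedges_mem hf' z hzf) (by simpa using hz)

lemma getLastD_mem : ∀ (l : List V) (z : V), l ≠ [] → l.getLastD z ∈ l := by
  intro l
  induction l with
  | nil => simp
  | cons a l ih =>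
    intro z _
    by_cases hl : l = []
    · subst hl; simp [List.getLastD]
    · rw [List.getLastD_cons]
      exact List.mem_cons_of_mem _ (ih a hl)

end GEaux

set_option linter.unusedSectionVars false

namespace GEaux

variable {V : Type} [Fintype V] [DecidableEq V]

lemma inc_t {A B : Finset (Sym2 V)} {z : V} {l : List V} (h : Alt A B z l)
    (hnd : (z :: l).Nodup) :
    ∀ f ∈ pedges z l, l.getLastD z ∈ f → (if Even l.length then f ∈ B else f ∈ A) := by
  induction h with
  | nil => simp [pedges]
  | @cons A B x y l he ht ih =>
    intro f hf htf
    rw [List.getLastD_cons] at htf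
    rcases Finset.mem_insert.mp hf with rfl | hf'
    · by_cases hl : l = []
      · subst hl
        simpa using he
      · exfalso
        have htl : l.getLastD y ∈ l := getLastD_mem l y hl
        rcases Sym2.mem_iff.mp htf with heq | heq
        · rw [heq] at htl
          exact (List.nodup_cons.mp hnd).1 (List.mem_cons_of_mem _ htl)
        · rw [heq] at htl
          exact (List.nodup_cons.mp (List.nodup_cons.mp hnd).2).1 htl
    · have := ih (List.nodup_cons.mp hnd).2 f hf' htf
      by_cases hev : Even l.length <;>
        simp_all [Nat.even_add_one]

lemma inc_last {A B : Finset (Sym2 V)} {z : V} {l : List V} (h : Alt A B z l) (hl : l ≠ []) :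
    ∃ f ∈ pedges z l, l.getLastD z ∈ f ∧ (if Even l.length then f ∈ B else f ∈ A) := by
  induction h with
  | nil => simp at hl
  | @cons A B x y l he ht ih =>
    by_cases hl' : l = []
    · subst hl'
      exact ⟨s(x, y), by simp [pedges], by simp [List.getLastD], by simpa using he⟩
    · obtain ⟨f, hf, htf, hty⟩ := ih hl'
      refine ⟨f, Finset.mem_insert_of_mem hf, by rwa [List.getLastD_cons], ?_⟩
      by_cases hev : Even l.length <;> simp_all [Nat.even_add_one]

lemma inc_mid {A B : Finset (Sym2 V)} {z : V} {l : List V} (h : Alt A B z l)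
    (hnd : (z :: l).Nodup) :
    ∀ x ∈ l, x ≠ l.getLastD z →
      (∃ f ∈ pedges z l, x ∈ f ∧ f ∈ A) ∧ (∃ f ∈ pedges z l, x ∈ f ∧ f ∈ B) := by
  induction h with
  | nil => simp
  | @cons A B z y l he ht ih =>
    intro x hx hxt
    rw [List.getLastD_cons] at hxt
    rcases List.mem_cons.mp hx with rfl | hx'
    · have hl : l ≠ [] := by
        rintro rfl
        simp [List.getLastD] at hxt
      obtain ⟨c, l', rfl⟩ : ∃ c l', l = c :: l' := by
        cases l with
        | nil => exact absurd rfl hl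
        | cons c l' => exact ⟨c, l', rfl⟩
      have hyc : s(x, c) ∈ B := by cases ht with | cons he' _ => exact he'
      constructor
      · exact ⟨s(z, x), Finset.mem_insert_self _ _, by simp, he⟩
      · exact ⟨s(x, c), Finset.mem_insert_of_mem (Finset.mem_insert_self _ _), by simp, hyc⟩
    · have hl : l ≠ [] := by rintro rfl; simp at hx'
      have := ih (List.nodup_cons.mp hnd).2 x hx' hxt
      exact ⟨⟨this.2.choose, Finset.mem_insert_of_mem this.2.choose_spec.1,
          this.2.choose_spec.2⟩,
        ⟨this.1.choose, Finset.mem_insert_of_mem this.1.choose_spec.1,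
          this.1.choose_spec.2⟩⟩

lemma wcount {A B : Finset (Sym2 V)} {z : V} {l : List V} (h : Alt A B z l)
    (hnd : (z :: l).Nodup) (hAB : Disjoint A B) :
    (pedges z l ∩ A).card = (l.length + 1) / 2 ∧ (pedges z l ∩ B).card = l.length / 2 := by
  induction h with
  | nil => simp [pedges]
  | @cons A B z y l he ht ih =>
    have hzl : z ∉ y :: l := (List.nodup_cons.mp hnd).1
    have he0 : s(z, y) ∉ pedges y l := by
      intro hmem
      exact hzl (pedges_mem hmem z (by simp))
    obtain ⟨ihB, ihA⟩ := ih (List.nodup_cons.mp hnd).2 hAB.symm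
    constructor
    · show ((insert s(z,y) (pedges y l)) ∩ A).card = _
      rw [Finset.insert_inter_of_mem he]
      rw [Finset.card_insert_of_notMem (fun hc => he0 (Finset.mem_inter.mp hc).1)]
      rw [ihA]
      simp only [List.length_cons]
      all_goals omega
    · show ((insert s(z,y) (pedges y l)) ∩ B).card = _
      rw [Finset.insert_inter_of_notMem (fun hc => Finset.disjoint_left.mp hAB he hc)]
      rw [ihB]
      simp only [List.length_cons]
      all_goals omega

lemma grow : ∀ (n : ℕ) (A B : Finset (Sym2 V)), A.card + B.card ≤ n → PM A → PM B →
    Disjoint A B → (∀ e ∈ A, ¬ e.IsDiag) → (∀ e ∈ B, ¬ e.IsDiag) →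
    ∀ z, ¬ msat B z → ∃ l, Alt A B z l ∧ (z :: l).Nodup ∧ Ended A B z l := by
  intro n
  induction n with
  | zero =>
    intro A B hcard _ _ _ _ _ z hz
    have hA : A = ∅ := Finset.card_eq_zero.mp (by omega)
    exact ⟨[], Alt.nil _ _ _, by simp, by simp [ended_nil, hA, msat]⟩
  | succ n ih =>
    intro A B hcard hPA hPB hAB hdA hdB z hz
    by_cases hA : msat A z
    · obtain ⟨e, heA, hze⟩ := hA
      obtain ⟨y, rfl⟩ := Sym2.mem_iff_exists.mp hze
      have hzy : z ≠ y := by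
        have := hdA _ heA
        simpa [Sym2.mk_isDiag_iff] using this
      have hyA : ¬ msat (A.erase s(z, y)) y := by
        rintro ⟨f, hf, hyf⟩
        have hfA : f ∈ A := Finset.mem_of_mem_erase hf
        have : f = s(z, y) := pm_eq hPA hfA heA hyf (by simp)
        exact (Finset.mem_erase.mp hf).1 this
      have hcard' : B.card + (A.erase s(z, y)).card ≤ n := by
        rw [Finset.card_erase_of_mem heA]
        have : 1 ≤ A.card := Finset.card_pos.mpr ⟨_, heA⟩
        omega
      obtain ⟨l₁, halt₁, hnd₁, hend₁⟩ := ih B (A.erase s(z, y)) hcard' hPB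
        (pm_mono hPA (Finset.erase_subset _ _)) (Finset.disjoint_of_subset_right
          (Finset.erase_subset _ _) hAB.symm) hdB
        (fun e' he' => hdA _ (Finset.erase_subset _ _ he')) y hyA
      have hznotin : z ∉ y :: l₁ := by
        intro hc
        rcases List.mem_cons.mp hc with rfl | hzl₁
        · exact hzy rfl
        · obtain ⟨f, hf, hzf⟩ := visit_sat halt₁ z hzl₁
          rcases Finset.mem_union.mp hf with hfB | hfAe
          · exact hz ⟨f, hfB, hzf⟩
          · have hfA : f ∈ A := Finset.mem_of_mem_erase hfAe
            have : f = s(z, y) := pm_eq hPA hfA heA hzf (by simp)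
            exact (Finset.mem_erase.mp hfAe).1 this
      refine ⟨y :: l₁, Alt.cons heA (alt_mono halt₁ (le_refl B) (Finset.erase_subset _ _)), ?_, ?_⟩
      · exact List.nodup_cons.mpr ⟨hznotin, hnd₁⟩
      · rw [ended_cons]
        unfold Ended at hend₁ ⊢
        by_cases hev : Even l₁.length
        · rwa [if_pos hev] at hend₁ ⊢
        · rw [if_neg hev] at hend₁ ⊢
          rintro ⟨f, hfA, htf⟩
          apply hend₁
          refine ⟨f, ?_, htf⟩
          rw [Finset.mem_erase]
          refine ⟨?_, hfA⟩
          rintro rfl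
          have hlne : l₁ ≠ [] := by rintro rfl; simp at hev
          have htl : l₁.getLastD y ∈ l₁ := getLastD_mem l₁ y hlne
          rcases Sym2.mem_iff.mp htf with heq | heq
          · rw [heq] at htl; exact hznotin (List.mem_cons_of_mem _ htl)
          · rw [heq] at htl; exact (List.nodup_cons.mp hnd₁).1 htl
    · exact ⟨[], Alt.nil _ _ _, by simp, by simpa [ended_nil] using hA⟩

lemma suffix_walk : ∀ {l : List V} {A B : Finset (Sym2 V)} {z : V}, Alt A B z l →
    Ended A B z l →
    ∀ e ∈ pedges z l, ∃ a b l₂, e = s(a, b) ∧ (a :: b :: l₂) <:+ (z :: l) ∧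
      ((Alt A B a (b :: l₂) ∧ Ended A B a (b :: l₂) ∧
          (b :: l₂).length % 2 = l.length % 2) ∨
       (Alt B A a (b :: l₂) ∧ Ended B A a (b :: l₂) ∧
          (b :: l₂).length % 2 ≠ l.length % 2)) := by
  intro l
  induction l with
  | nil => simp [pedges]
  | cons y l' ih =>
    intro A B z halt hend e he
    cases halt with
    | cons he₀ ht =>
      have hend' : Ended B A y l' := ended_cons.mp hend
      rcases Finset.mem_insert.mp he with rfl | he'
      · exact ⟨z, y, l', rfl, List.suffix_refl _,
          Or.inl ⟨Alt.cons he₀ ht, hend, rfl⟩⟩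
      · obtain ⟨a, b, l₂, rfl, hsuf, hcase⟩ := ih ht hend' e he'
        refine ⟨a, b, l₂, rfl, hsuf.trans (List.suffix_cons z (y :: l')), ?_⟩
        rcases hcase with ⟨h1, h2, h3⟩ | ⟨h1, h2, h3⟩
        · refine Or.inr ⟨h1, h2, ?_⟩
          simp only [List.length_cons] at h3 ⊢
          omega
        · refine Or.inl ⟨h1, h2, ?_⟩
          simp only [List.length_cons] at h3 ⊢
          omega

end GEaux

namespace GEaux

variable {V : Type} [Fintype V] [DecidableEq V]

lemma disj_sdiff (M M' : Finset (Sym2 V)) : Disjoint (M \ M') (M' \ M) := by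
  rw [Finset.disjoint_left]
  intro e he he'
  exact (Finset.mem_sdiff.mp he').2 (Finset.mem_sdiff.mp he).1

lemma w_inter {M M' : Finset (Sym2 V)} {z : V} {l : List V}
    (halt : Alt (M \ M') (M' \ M) z l) :
    pedges z l ∩ M = pedges z l ∩ (M \ M') ∧
    pedges z l \ M = pedges z l ∩ (M' \ M) := by
  have hsub := pedges_sub halt
  constructor
  · ext e
    constructor
    · intro he
      have h1 := Finset.mem_inter.mp he
      rcases Finset.mem_union.mp (hsub h1.1) with h | h
      · exact Finset.mem_inter.mpr ⟨h1.1, h⟩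
      · exact absurd h1.2 (Finset.mem_sdiff.mp h).2
    · intro he
      have h1 := Finset.mem_inter.mp he
      exact Finset.mem_inter.mpr ⟨h1.1, (Finset.mem_sdiff.mp h1.2).1⟩
  · ext e
    constructor
    · intro he
      have h1 := Finset.mem_sdiff.mp he
      rcases Finset.mem_union.mp (hsub h1.1) with h | h
      · exact absurd (Finset.mem_sdiff.mp h).1 h1.2
      · exact Finset.mem_inter.mpr ⟨h1.1, h⟩
    · intro he
      have h1 := Finset.mem_inter.mp he
      exact Finset.mem_sdiff.mpr ⟨h1.1, (Finset.mem_sdiff.mp h1.2).2⟩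

/-- Key disjointness fact for `swap1`: a kept `M`-edge cannot meet an added walk edge. -/
lemma swap1_key {G : SimpleGraph V} {M M' : Finset (Sym2 V)}
    (hM : IsGMatching G M) (hM' : IsGMatching G M')
    {z : V} {l : List V} (halt : Alt (M \ M') (M' \ M) z l) (hnd : (z :: l).Nodup)
    (hend : Ended (M \ M') (M' \ M) z l)
    (hzM : ∀ e ∈ M, z ∈ e → e ∈ pedges z l) :
    ∀ e ∈ M, e ∉ pedges z l → ∀ x ∈ e, ∀ f ∈ pedges z l \ M, x ∉ f := by
  intro e heM heW x hxe f hf hxf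
  have hfB : f ∈ M' \ M := (Finset.mem_inter.mp ((w_inter halt).2 ▸ hf)).2
  have hfW : f ∈ pedges z l := (Finset.mem_sdiff.mp hf).1
  rcases List.mem_cons.mp (pedges_mem hfW x hxf) with rfl | hxl
  · exact heW (hzM e heM hxe)
  · by_cases hxt : x = l.getLastD z
    · subst hxt
      have hft := inc_t halt hnd f hfW hxf
      by_cases hev : Even l.length
      · rw [if_pos hev] at hft
        -- f ∈ M' \ M, so f ∈ M'.  Kill e:
        by_cases heM' : e ∈ M'
        · -- e ∈ M ∩ M' : contradiction with PM M' (e and f share x)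
          have : e = f := pm_eq hM'.2 heM' (Finset.mem_sdiff.mp hfB).1 hxe hxf
          exact (Finset.mem_sdiff.mp hfB).2 (this ▸ heM)
        · -- e ∈ M \ M' : contradicts Ended
          unfold Ended at hend
          rw [if_pos hev] at hend
          exact hend ⟨e, Finset.mem_sdiff.mpr ⟨heM, heM'⟩, hxe⟩
      · rw [if_neg hev] at hft
        exact (Finset.mem_sdiff.mp hfB).2 (Finset.mem_sdiff.mp hft).1
    · obtain ⟨⟨g, hgW, hxg, hgA⟩, -⟩ := inc_mid halt hnd x hxl hxt
      have hgM : g ∈ M := (Finset.mem_sdiff.mp hgA).1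
      have : e = g := pm_eq hM.2 heM hgM hxe hxg
      exact heW (this ▸ hgW)

lemma swap1 {G : SimpleGraph V} {M M' : Finset (Sym2 V)}
    (hM : IsGMatching G M) (hM' : IsGMatching G M')
    {z : V} {l : List V} (halt : Alt (M \ M') (M' \ M) z l) (hnd : (z :: l).Nodup)
    (hend : Ended (M \ M') (M' \ M) z l)
    (hzM : ∀ e ∈ M, z ∈ e → e ∈ pedges z l) :
    IsGMatching G ((M \ pedges z l) ∪ (pedges z l \ M)) ∧
    ((M \ pedges z l) ∪ (pedges z l \ M)).card + (l.length + 1) / 2 = M.card + l.length / 2 ∧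
    ¬ msat ((M \ pedges z l) ∪ (pedges z l \ M)) z ∧
    (∀ x, msat ((M \ pedges z l) ∪ (pedges z l \ M)) x → msat M x ∨ x ∈ z :: l) ∧
    (¬ Even l.length → ¬ msat ((M \ pedges z l) ∪ (pedges z l \ M)) (l.getLastD z)) := by
  have hkey := swap1_key hM hM' halt hnd hend hzM
  have hWM' : pedges z l \ M ⊆ M' := by
    intro e he
    have h1 : e ∈ pedges z l ∩ (M' \ M) := (w_inter halt).2 ▸ he
    exact (Finset.mem_sdiff.mp (Finset.mem_inter.mp h1).2).1
  refine ⟨⟨?_, ?_⟩, ?_, ?_, ?_, ?_⟩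
  · -- edges in G
    intro e he
    rcases Finset.mem_union.mp he with h | h
    · exact hM.1 e (Finset.mem_sdiff.mp h).1
    · exact hM'.1 e (hWM' h)
  · -- pairwise disjoint
    intro e he f hf hef x hxe hxf
    rcases Finset.mem_union.mp he with he1 | he1 <;> rcases Finset.mem_union.mp hf with hf1 | hf1
    · exact hM.2 e (Finset.mem_sdiff.mp he1).1 f (Finset.mem_sdiff.mp hf1).1 hef x hxe hxf
    · exact hkey e (Finset.mem_sdiff.mp he1).1 (Finset.mem_sdiff.mp he1).2 x hxe f hf1 hxf
    · exact hkey f (Finset.mem_sdiff.mp hf1).1 (Finset.mem_sdiff.mp hf1).2 x hxf e he1 hxe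
    · exact hM'.2 e (hWM' he1) f (hWM' hf1) hef x hxe hxf
  · -- cardinality
    have hdisj : Disjoint (M \ pedges z l) (pedges z l \ M) := by
      rw [Finset.disjoint_left]
      intro e he he'
      exact (Finset.mem_sdiff.mp he).2 (Finset.mem_sdiff.mp he').1
    rw [Finset.card_union_of_disjoint hdisj]
    have h1 : (M \ pedges z l).card + (M ∩ pedges z l).card = M.card :=
      Finset.card_sdiff_add_card_inter M (pedges z l)
    have h2 : (M ∩ pedges z l).card = (l.length + 1) / 2 := by
      rw [Finset.inter_comm, (w_inter halt).1]
      exact (wcount halt hnd (disj_sdiff M M')).1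
    have h3 : (pedges z l \ M).card = l.length / 2 := by
      rw [(w_inter halt).2]
      exact (wcount halt hnd (disj_sdiff M M')).2
    omega
  · -- z not saturated
    rintro ⟨e, he, hze⟩
    rcases Finset.mem_union.mp he with h | h
    · exact (Finset.mem_sdiff.mp h).2 (hzM e (Finset.mem_sdiff.mp h).1 hze)
    · obtain ⟨y, l', rfl, rfl⟩ := inc_z halt (List.nodup_cons.mp hnd).1 e
        (Finset.mem_sdiff.mp h).1 hze
      cases halt with
      | cons he₀ ht =>
        exact (Finset.mem_sdiff.mp h).2 (Finset.mem_sdiff.mp he₀).1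
  · -- saturation transfer
    rintro x ⟨e, he, hxe⟩
    rcases Finset.mem_union.mp he with h | h
    · exact Or.inl ⟨e, (Finset.mem_sdiff.mp h).1, hxe⟩
    · exact Or.inr (pedges_mem (Finset.mem_sdiff.mp h).1 x hxe)
  · -- far end not saturated, odd case
    intro hodd
    have hlne : l ≠ [] := by rintro rfl; simp at hodd
    rintro ⟨e, he, hte⟩
    rcases Finset.mem_union.mp he with h | h
    · -- e ∈ M \ W : but t's M-edge is the last walk edge
      obtain ⟨f, hfW, htf, hfty⟩ := inc_last halt hlne
      rw [if_neg hodd] at hfty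
      have hfM : f ∈ M := (Finset.mem_sdiff.mp hfty).1
      have : e = f := pm_eq hM.2 (Finset.mem_sdiff.mp h).1 hfM hte htf
      exact (Finset.mem_sdiff.mp h).2 (this ▸ hfW)
    · -- e ∈ W \ M : e would be an A-type edge at t
      have := inc_t halt hnd e (Finset.mem_sdiff.mp h).1 hte
      rw [if_neg hodd] at this
      exact (Finset.mem_sdiff.mp h).2 (Finset.mem_sdiff.mp this).1

/-- Key disjointness fact for `swap2`. -/
lemma swap2_key {G : SimpleGraph V} {M M' : Finset (Sym2 V)}
    (hM : IsGMatching G M) (hM' : IsGMatching G M')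
    {z : V} {l : List V} (halt : Alt (M \ M') (M' \ M) z l) (hnd : (z :: l).Nodup)
    (hend : Ended (M \ M') (M' \ M) z l)
    (hz : ¬ msat M' z) :
    ∀ e ∈ M', e ∉ pedges z l → ∀ x ∈ e, ∀ f ∈ pedges z l \ M', x ∉ f := by
  intro e heM' heW x hxe f hf hxf
  have hfW : f ∈ pedges z l := (Finset.mem_sdiff.mp hf).1
  have hfA : f ∈ M \ M' := by
    rcases Finset.mem_union.mp (pedges_sub halt hfW) with h | h
    · exact h
    · exact absurd (Finset.mem_sdiff.mp h).1 (fun hc => (Finset.mem_sdiff.mp hf).2 hc)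
  rcases List.mem_cons.mp (pedges_mem hfW x hxf) with rfl | hxl
  · exact hz ⟨e, heM', hxe⟩
  · by_cases hxt : x = l.getLastD z
    · subst hxt
      have hft := inc_t halt hnd f hfW hxf
      by_cases hev : Even l.length
      · rw [if_pos hev] at hft
        exact (Finset.mem_sdiff.mp hfA).2 (Finset.mem_sdiff.mp hft).1
      · rw [if_neg hev] at hft
        by_cases heM : e ∈ M
        · have hfM : f ∈ M := (Finset.mem_sdiff.mp hfA).1
          have : e = f := pm_eq hM.2 heM hfM hxe hxf
          exact (Finset.mem_sdiff.mp hfA).2 (this ▸ heM')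
        · unfold Ended at hend
          rw [if_neg hev] at hend
          exact hend ⟨e, Finset.mem_sdiff.mpr ⟨heM', heM⟩, hxe⟩
    · obtain ⟨-, ⟨g, hgW, hxg, hgB⟩⟩ := inc_mid halt hnd x hxl hxt
      have hgM' : g ∈ M' := (Finset.mem_sdiff.mp hgB).1
      have : e = g := pm_eq hM'.2 heM' hgM' hxe hxg
      exact heW (this ▸ hgW)

lemma swap2 {G : SimpleGraph V} {M M' : Finset (Sym2 V)}
    (hM : IsGMatching G M) (hM' : IsGMatching G M')
    {z : V} {l : List V} (halt : Alt (M \ M') (M' \ M) z l) (hnd : (z :: l).Nodup)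
    (hend : Ended (M \ M') (M' \ M) z l)
    (hz : ¬ msat M' z) :
    IsGMatching G ((M' \ pedges z l) ∪ (pedges z l \ M')) ∧
    ((M' \ pedges z l) ∪ (pedges z l \ M')).card + l.length / 2 =
      M'.card + (l.length + 1) / 2 ∧
    (∀ x, msat ((M' \ pedges z l) ∪ (pedges z l \ M')) x → msat M' x ∨ x ∈ z :: l) ∧
    (Even l.length → ¬ msat ((M' \ pedges z l) ∪ (pedges z l \ M')) (l.getLastD z)) := by
  have hkey := swap2_key hM hM' halt hnd hend hz
  have hWM : pedges z l \ M' ⊆ M := by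
    intro e he
    have heW : e ∈ pedges z l := (Finset.mem_sdiff.mp he).1
    rcases Finset.mem_union.mp (pedges_sub halt heW) with h | h
    · exact (Finset.mem_sdiff.mp h).1
    · exact absurd (Finset.mem_sdiff.mp h).1 (fun hc => (Finset.mem_sdiff.mp he).2 hc)
  have hWM'eq : pedges z l ∩ M' = pedges z l ∩ (M' \ M) := by
    ext e
    constructor
    · intro he
      have h1 := Finset.mem_inter.mp he
      rcases Finset.mem_union.mp (pedges_sub halt h1.1) with h | h
      · exact absurd h1.2 (Finset.mem_sdiff.mp h).2
      · exact Finset.mem_inter.mpr ⟨h1.1, h⟩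
    · intro he
      have h1 := Finset.mem_inter.mp he
      exact Finset.mem_inter.mpr ⟨h1.1, (Finset.mem_sdiff.mp h1.2).1⟩
  refine ⟨⟨?_, ?_⟩, ?_, ?_, ?_⟩
  · intro e he
    rcases Finset.mem_union.mp he with h | h
    · exact hM'.1 e (Finset.mem_sdiff.mp h).1
    · exact hM.1 e (hWM h)
  · intro e he f hf hef x hxe hxf
    rcases Finset.mem_union.mp he with he1 | he1 <;> rcases Finset.mem_union.mp hf with hf1 | hf1
    · exact hM'.2 e (Finset.mem_sdiff.mp he1).1 f (Finset.mem_sdiff.mp hf1).1 hef x hxe hxf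
    · exact hkey e (Finset.mem_sdiff.mp he1).1 (Finset.mem_sdiff.mp he1).2 x hxe f hf1 hxf
    · exact hkey f (Finset.mem_sdiff.mp hf1).1 (Finset.mem_sdiff.mp hf1).2 x hxf e he1 hxe
    · exact hM.2 e (hWM he1) f (hWM hf1) hef x hxe hxf
  · have hdisj : Disjoint (M' \ pedges z l) (pedges z l \ M') := by
      rw [Finset.disjoint_left]
      intro e he he'
      exact (Finset.mem_sdiff.mp he).2 (Finset.mem_sdiff.mp he').1
    rw [Finset.card_union_of_disjoint hdisj]
    have h1 : (M' \ pedges z l).card + (M' ∩ pedges z l).card = M'.card :=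
      Finset.card_sdiff_add_card_inter M' (pedges z l)
    have h2 : (M' ∩ pedges z l).card = l.length / 2 := by
      rw [Finset.inter_comm, hWM'eq]
      exact (wcount halt hnd (disj_sdiff M M')).2
    have h3 : (pedges z l \ M').card = (l.length + 1) / 2 := by
      have : pedges z l \ M' = pedges z l ∩ (M \ M') := by
        ext e
        constructor
        · intro he
          have h1 := Finset.mem_sdiff.mp he
          rcases Finset.mem_union.mp (pedges_sub halt h1.1) with h | h
          · exact Finset.mem_inter.mpr ⟨h1.1, h⟩
          · exact absurd (Finset.mem_sdiff.mp h).1 h1.2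
        · intro he
          have h1 := Finset.mem_inter.mp he
          exact Finset.mem_sdiff.mpr ⟨h1.1, (Finset.mem_sdiff.mp h1.2).2⟩
      rw [this]
      exact (wcount halt hnd (disj_sdiff M M')).1
    omega
  · rintro x ⟨e, he, hxe⟩
    rcases Finset.mem_union.mp he with h | h
    · exact Or.inl ⟨e, (Finset.mem_sdiff.mp h).1, hxe⟩
    · exact Or.inr (pedges_mem (Finset.mem_sdiff.mp h).1 x hxe)
  · intro hev
    by_cases hlne : l = []
    · subst hlne
      simpa [pedges, Ended, msat] using hz
    rintro ⟨e, he, hte⟩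
    rcases Finset.mem_union.mp he with h | h
    · obtain ⟨f, hfW, htf, hfty⟩ := inc_last halt hlne
      rw [if_pos hev] at hfty
      have hfM' : f ∈ M' := (Finset.mem_sdiff.mp hfty).1
      have : e = f := pm_eq hM'.2 (Finset.mem_sdiff.mp h).1 hfM' hte htf
      exact (Finset.mem_sdiff.mp h).2 (this ▸ hfW)
    · have := inc_t halt hnd e (Finset.mem_sdiff.mp h).1 hte
      rw [if_pos hev] at this
      exact (Finset.mem_sdiff.mp h).2 (Finset.mem_sdiff.mp this).1

end GEaux

namespace GEaux

variable {V : Type} [Fintype V] [DecidableEq V]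

open SimpleGraph

lemma not_msat_iff {M : Finset (Sym2 V)} {v : V} : ¬ msat M v ↔ ∀ e ∈ M, v ∉ e := by
  unfold msat
  push_neg
  rfl

lemma gmatch_le_gnu {G : SimpleGraph V} {M : Finset (Sym2 V)} (h : IsGMatching G M) :
    M.card ≤ gnu G := by
  apply Finset.le_sup (f := Finset.card)
  simp only [Finset.mem_filter, Finset.mem_powerset]
  exact ⟨Finset.subset_univ M, h⟩

lemma gmatch_empty (G : SimpleGraph V) : IsGMatching G (∅ : Finset (Sym2 V)) :=
  ⟨fun e he => absurd he (Finset.notMem_empty e), fun e he => absurd he (Finset.notMem_empty e)⟩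

lemma gnu_exists (G : SimpleGraph V) : ∃ M, IsGMatching G M ∧ M.card = gnu G := by
  have hne : (((Finset.univ : Finset (Sym2 V)).powerset.filter
      fun M => IsGMatching G M)).Nonempty := by
    refine ⟨∅, ?_⟩
    simp only [Finset.mem_filter, Finset.mem_powerset]
    exact ⟨Finset.empty_subset _, gmatch_empty G⟩
  obtain ⟨M, hM, hMc⟩ := Finset.exists_mem_eq_sup _ hne Finset.card
  exact ⟨M, (Finset.mem_filter.mp hM).2, hMc.symm⟩

lemma gnu_mono {G H : SimpleGraph V} (h : G ≤ H) : gnu G ≤ gnu H := by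
  obtain ⟨M, hM, hMc⟩ := gnu_exists G
  calc gnu G = M.card := hMc.symm
    _ ≤ gnu H := gmatch_le_gnu ⟨fun e he => edgeSet_mono h (hM.1 e he), hM.2⟩

lemma delV_le {G : SimpleGraph V} {v : V} : delV G v ≤ G := fun _ _ h => h.1

lemma delV_mono {G H : SimpleGraph V} (h : G ≤ H) (v : V) : delV G v ≤ delV H v :=
  fun _ _ hab => ⟨h hab.1, hab.2⟩

lemma mem_delV_edgeSet {G : SimpleGraph V} {v : V} {e : Sym2 V} :
    e ∈ (delV G v).edgeSet ↔ e ∈ G.edgeSet ∧ v ∉ e := by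
  induction e using Sym2.ind with
  | _ a b =>
    show (delV G v).Adj a b ↔ G.Adj a b ∧ v ∉ s(a, b)
    simp only [delV, Sym2.mem_iff]
    constructor
    · rintro ⟨h, ha, hb⟩
      exact ⟨h, by rintro (rfl | rfl) <;> simp_all⟩
    · rintro ⟨h, hv⟩
      push_neg at hv
      exact ⟨h, fun hc => hv.1 hc.symm, fun hc => hv.2 hc.symm⟩

lemma gmatch_delV {G : SimpleGraph V} {v : V} {M : Finset (Sym2 V)} :
    IsGMatching (delV G v) M ↔ IsGMatching G M ∧ ∀ e ∈ M, v ∉ e := by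
  constructor
  · intro h
    exact ⟨⟨fun e he => (mem_delV_edgeSet.mp (h.1 e he)).1, h.2⟩,
      fun e he => (mem_delV_edgeSet.mp (h.1 e he)).2⟩
  · intro h
    exact ⟨fun e he => mem_delV_edgeSet.mpr ⟨h.1.1 e he, h.2 e he⟩, h.1.2⟩

lemma mem_Dset_iff {G : SimpleGraph V} {v : V} :
    v ∈ Dset G ↔ ∃ M, IsGMatching G M ∧ M.card = gnu G ∧ ∀ e ∈ M, v ∉ e := by
  simp only [Dset, Set.mem_setOf_eq]
  constructor
  · intro h
    obtain ⟨M, hM, hMc⟩ := gnu_exists (delV G v)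
    have h2 := gmatch_delV.mp hM
    exact ⟨M, h2.1, by rw [hMc, h], h2.2⟩
  · rintro ⟨M, hM, hMc, hv⟩
    refine le_antisymm (gnu_mono delV_le) ?_
    calc gnu G = M.card := hMc.symm
      _ ≤ gnu (delV G v) := gmatch_le_gnu (gmatch_delV.mpr ⟨hM, hv⟩)

lemma not_mem_Dset {G : SimpleGraph V} {v : V} (h : v ∉ Dset G) :
    ∀ M, IsGMatching G M → M.card = gnu G → msat M v := by
  intro M hM hMc
  by_contra hc
  exact h (mem_Dset_iff.mpr ⟨M, hM, hMc, not_msat_iff.mp hc⟩)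

lemma gmatch_insert {G : SimpleGraph V} {N : Finset (Sym2 V)} {a b : V}
    (hN : IsGMatching G N) (hab : G.Adj a b) (ha : ¬ msat N a) (hb : ¬ msat N b) :
    IsGMatching G (insert s(a, b) N) ∧ (insert s(a, b) N).card = N.card + 1 := by
  have hnotin : s(a, b) ∉ N := fun hc => ha ⟨_, hc, by simp⟩
  refine ⟨⟨?_, ?_⟩, Finset.card_insert_of_notMem hnotin⟩
  · intro e he
    rcases Finset.mem_insert.mp he with rfl | he'
    · exact hab
    · exact hN.1 e he'
  · intro e he f hf hef x hxe hxf
    rcases Finset.mem_insert.mp he with rfl | he' <;> rcases Finset.mem_insert.mp hf with rfl | hf'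
    · exact hef rfl
    · rcases Sym2.mem_iff.mp hxe with rfl | rfl
      · exact ha ⟨f, hf', hxf⟩
      · exact hb ⟨f, hf', hxf⟩
    · rcases Sym2.mem_iff.mp hxf with rfl | rfl
      · exact ha ⟨e, he', hxe⟩
      · exact hb ⟨e, he', hxe⟩
    · exact hN.2 e he' f hf' hef x hxe hxf

/-- Common setup: in the symmetric difference of two matchings, if `z` is `M'`-unsaturated
then every `M`-edge at `z` lies on the (maximal) walk from `z`. -/
lemma hzM_of {M M' : Finset (Sym2 V)} (hPM : PM M) {z : V} {l : List V}
    (halt : Alt (M \ M') (M' \ M) z l) (hend : Ended (M \ M') (M' \ M) z l)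
    (hz : ¬ msat M' z) :
    ∀ e ∈ M, z ∈ e → e ∈ pedges z l := by
  intro e heM hze
  have heA : e ∈ M \ M' := Finset.mem_sdiff.mpr ⟨heM, fun hc => hz ⟨e, hc, hze⟩⟩
  cases halt with
  | nil =>
    exact absurd ⟨e, heA, hze⟩ (ended_nil.mp hend)
  | cons he₀ ht =>
    have : e = _ := pm_eq (pm_mono hPM Finset.sdiff_subset) heA he₀ hze (by simp)
    rw [this]
    exact Finset.mem_insert_self _ _

/-- HL1: if a maximum matching `M` contains `s(u,w)`, `M'` is a maximum matching missing `d`,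
and `u` is adjacent to `d`, then some maximum matching misses `u` or misses `w`. -/
lemma HL1 {G : SimpleGraph V} {M M' : Finset (Sym2 V)} {u w d : V}
    (hM : IsGMatching G M) (hMc : M.card = gnu G)
    (hM' : IsGMatching G M') (hM'c : M'.card = gnu G)
    (hd : ¬ msat M' d) (hadj : G.Adj u d) (huw : s(u, w) ∈ M) (hwd : w ≠ d) :
    ∃ N, IsGMatching G N ∧ N.card = gnu G ∧ (¬ msat N u ∨ ¬ msat N w) := by
  classical
  set A := M \ M' with hA
  set B := M' \ M with hB
  have hPA : PM A := pm_mono hM.2 Finset.sdiff_subset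
  have hPB : PM B := pm_mono hM'.2 Finset.sdiff_subset
  have hndA : ∀ e ∈ A, ¬ e.IsDiag := fun e he =>
    (G.not_isDiag_of_mem_edgeSet (hM.1 e (Finset.mem_sdiff.mp he).1))
  have hndB : ∀ e ∈ B, ¬ e.IsDiag := fun e he =>
    (G.not_isDiag_of_mem_edgeSet (hM'.1 e (Finset.mem_sdiff.mp he).1))
  have hzB : ¬ msat B d := fun ⟨e, he, hde⟩ => hd ⟨e, (Finset.mem_sdiff.mp he).1, hde⟩
  obtain ⟨l, halt, hnd, hend⟩ := grow (A.card + B.card) A B le_rfl hPA hPB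
    (disj_sdiff M M') hndA hndB d hzB
  have hzM := hzM_of hM.2 halt hend hd
  have huw_ne : u ≠ w := by
    have := G.not_isDiag_of_mem_edgeSet (hM.1 _ huw)
    simpa [Sym2.mk_isDiag_iff] using this
  by_cases hpar : Even l.length
  · -- even case
    obtain ⟨hN₃, hN₃c, hN₃z, hN₃tr, -⟩ := swap1 hM hM' halt hnd hend hzM
    have hN₃card : ((M \ pedges d l) ∪ (pedges d l \ M)).card = gnu G := by
      rw [Nat.even_iff] at hpar
      omega
    by_cases huwW : s(u, w) ∈ pedges d l
    · -- the edge lies on the walk: take the suffix walk starting at the edge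
      obtain ⟨a, b, l₂, heab, hsuf, hcase⟩ := suffix_walk halt hend _ huwW
      have huwA : s(u, w) ∈ A := by
        rcases Finset.mem_union.mp (pedges_sub halt huwW) with h | h
        · exact h
        · exact absurd huw (Finset.mem_sdiff.mp h).2
      rcases hcase with ⟨halt₂, hend₂, hpar₂⟩ | ⟨halt₂, hend₂, hpar₂⟩
      swap
      · -- wrong orientation impossible: first edge of the suffix is s(a,b) = s(u,w) ∈ A
        exfalso
        cases halt₂ with
        | cons he₀ ht =>
          exact (Finset.mem_sdiff.mp he₀).2 (heab ▸ huw)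
      · have hnd₂ : (a :: b :: l₂).Nodup := hnd.sublist hsuf.sublist
        have hzM₂ : ∀ e ∈ M, a ∈ e → e ∈ pedges a (b :: l₂) := by
          intro e heM hae
          have habM : s(a, b) ∈ M := heab ▸ huw
          have : e = s(a, b) := pm_eq hM.2 heM habM hae (by simp)
          rw [this]
          exact Finset.mem_insert_self _ _
        obtain ⟨hK, hKc, hKz, -, -⟩ := swap1 hM hM' halt₂ hnd₂ hend₂ hzM₂
        have hKcard : ((M \ pedges a (b :: l₂)) ∪ (pedges a (b :: l₂) \ M)).card = gnu G := by
          rw [Nat.even_iff] at hpar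
          omega
        refine ⟨_, hK, hKcard, ?_⟩
        have : a = u ∨ a = w := by
          rcases Sym2.eq_iff.mp heab.symm with ⟨h1, h2⟩ | ⟨h1, h2⟩
          · exact Or.inl h1
          · exact Or.inr h1
        rcases this with rfl | rfl
        · exact Or.inl hKz
        · exact Or.inr hKz
    · -- the edge is off the walk: swap it for s(u,d)
      set N₃ := (M \ pedges d l) ∪ (pedges d l \ M) with hN₃def
      have huwN₃ : s(u, w) ∈ N₃ := Finset.mem_union_left _ (Finset.mem_sdiff.mpr ⟨huw, huwW⟩)
      have hdu : u ≠ d := hadj.ne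
      have hun : ¬ msat (N₃.erase s(u, w)) u := by
        rintro ⟨e, he, hue⟩
        have : e = s(u, w) := pm_eq hN₃.2 (Finset.mem_of_mem_erase he) huwN₃ hue (by simp)
        exact (Finset.mem_erase.mp he).1 this
      have hwn : ¬ msat (N₃.erase s(u, w)) w := by
        rintro ⟨e, he, hwe⟩
        have : e = s(u, w) := pm_eq hN₃.2 (Finset.mem_of_mem_erase he) huwN₃ hwe (by simp)
        exact (Finset.mem_erase.mp he).1 this
      have hdn : ¬ msat (N₃.erase s(u, w)) d := fun ⟨e, he, hde⟩ =>
        hN₃z ⟨e, Finset.mem_of_mem_erase he, hde⟩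
      have hErase : IsGMatching G (N₃.erase s(u, w)) :=
        ⟨fun e he => hN₃.1 e (Finset.mem_of_mem_erase he),
         pm_mono hN₃.2 (Finset.erase_subset _ _)⟩
      obtain ⟨hIns, hInsc⟩ := gmatch_insert hErase hadj hun hdn
      refine ⟨_, hIns, ?_, Or.inr ?_⟩
      · rw [hInsc, Finset.card_erase_of_mem huwN₃]
        have : 1 ≤ N₃.card := Finset.card_pos.mpr ⟨_, huwN₃⟩
        omega
      · rintro ⟨e, he, hwe⟩
        rcases Finset.mem_insert.mp he with rfl | he'
        · rcases Sym2.mem_iff.mp hwe with rfl | rfl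
          · exact huw_ne rfl
          · exact hwd rfl
        · exact hwn ⟨e, he', hwe⟩
  · -- odd case: Berge augmentation contradicts maximality of M'
    exfalso
    obtain ⟨hK, hKc, -, -⟩ := swap2 hM hM' halt hnd hend hd
    have : ((M' \ pedges d l) ∪ (pedges d l \ M')).card ≤ gnu G := gmatch_le_gnu hK
    rw [Nat.even_iff] at hpar
    omega

/-- HL2: augmenting-path argument used for vertex-deletion stability. -/
lemma HL2 {G : SimpleGraph V} {M0 M' : Finset (Sym2 V)} {u v d : V}
    (hM0 : IsGMatching G M0) (hM' : IsGMatching G M') (hMc : M0.card + 1 = M'.card)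
    (h0u : ¬ msat M0 u) (h0v : ¬ msat M0 v) (hd : ¬ msat M' d)
    (hadj : G.Adj u d) (hvu : v ≠ u) (hvd : v ≠ d) :
    ∃ N, IsGMatching G N ∧ M'.card ≤ N.card ∧ (¬ msat N u ∨ ¬ msat N v) := by
  classical
  set A := M' \ M0 with hA
  set B := M0 \ M' with hB
  have hPA : PM A := pm_mono hM'.2 Finset.sdiff_subset
  have hPB : PM B := pm_mono hM0.2 Finset.sdiff_subset
  have hndA : ∀ e ∈ A, ¬ e.IsDiag := fun e he =>
    (G.not_isDiag_of_mem_edgeSet (hM'.1 e (Finset.mem_sdiff.mp he).1))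
  have hndB : ∀ e ∈ B, ¬ e.IsDiag := fun e he =>
    (G.not_isDiag_of_mem_edgeSet (hM0.1 e (Finset.mem_sdiff.mp he).1))
  have hzB : ¬ msat B u := fun ⟨e, he, hue⟩ => h0u ⟨e, (Finset.mem_sdiff.mp he).1, hue⟩
  obtain ⟨l, halt, hnd, hend⟩ := grow (A.card + B.card) A B le_rfl hPA hPB
    (disj_sdiff M' M0) hndA hndB u hzB
  have hzM := hzM_of hM'.2 halt hend h0u
  by_cases hpar : Even l.length
  · -- even: M' ∆ W is maximum and misses u
    obtain ⟨hN₃, hN₃c, hN₃z, -, -⟩ := swap1 hM' hM0 halt hnd hend hzM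
    refine ⟨_, hN₃, ?_, Or.inl hN₃z⟩
    rw [Nat.even_iff] at hpar
    omega
  · -- odd
    obtain ⟨hN', hN'c, hN'tr, -⟩ := swap2 hM' hM0 halt hnd hend h0u
    set N' := (M0 \ pedges u l) ∪ (pedges u l \ M0) with hN'def
    have hN'card : N'.card = M'.card := by
      rw [Nat.even_iff] at hpar
      omega
    by_cases hvN : msat N' v
    · -- v must be the far end of the walk
      have hvl : v ∈ l := by
        rcases hN'tr v hvN with h | h
        · exact absurd h h0v
        · rcases List.mem_cons.mp h with rfl | h'
          · exact absurd rfl hvu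
          · exact h'
      have hvt : v = l.getLastD u := by
        by_contra hne
        obtain ⟨-, ⟨g, hgW, hvg, hgB⟩⟩ := inc_mid halt hnd v hvl hne
        exact h0v ⟨g, (Finset.mem_sdiff.mp hgB).1, hvg⟩
      obtain ⟨hN₁, hN₁c, hN₁z, hN₁tr, hN₁t⟩ := swap1 hM' hM0 halt hnd hend hzM
      set N₁ := (M' \ pedges u l) ∪ (pedges u l \ M') with hN₁def
      have hN₁v : ¬ msat N₁ v := hvt ▸ hN₁t hpar
      have hdN₁ : ¬ msat N₁ d := by
        intro hm
        rcases hN₁tr d hm with h | h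
        · exact hd h
        · rcases List.mem_cons.mp h with rfl | h'
          · exact hadj.ne rfl
          · have hdt : d ≠ l.getLastD u := fun hc => hvd (hvt.trans hc.symm)
            obtain ⟨⟨g, hgW, hdg, hgA⟩, -⟩ := inc_mid halt hnd d h' hdt
            exact hd ⟨g, (Finset.mem_sdiff.mp hgA).1, hdg⟩
      obtain ⟨hIns, hInsc⟩ := gmatch_insert hN₁ hadj hN₁z hdN₁
      refine ⟨_, hIns, ?_, Or.inr ?_⟩
      · rw [hInsc]
        rw [Nat.even_iff] at hpar
        omega
      · rintro ⟨e, he, hve⟩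
        rcases Finset.mem_insert.mp he with rfl | he'
        · rcases Sym2.mem_iff.mp hve with rfl | rfl
          · exact hvu rfl
          · exact hvd rfl
        · exact hN₁v ⟨e, he', hve⟩
    · exact ⟨N', hN', le_of_eq hN'card.symm, Or.inr hvN⟩

end GEaux

namespace GEaux

variable {V : Type} [Fintype V] [DecidableEq V]

open SimpleGraph

section Main

variable {G : SimpleGraph V} {u w : V}

/-- No maximum matching contains an edge `s(u,w)` with `u ∈ A(G)` and `w ∉ D(G)`. -/
lemma nomax (hu : u ∈ Aset G) (hw : w ∉ Dset G) :
    ∀ M, IsGMatching G M → M.card = gnu G → s(u, w) ∉ M := by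
  intro M hM hMc hin
  obtain ⟨huD, d, hdD, hadj⟩ := hu
  have hwd : w ≠ d := fun h => hw (h ▸ hdD)
  obtain ⟨M', hM', hM'c, hM'v⟩ := mem_Dset_iff.mp hdD
  have hd : ¬ msat M' d := fun ⟨e, he, hde⟩ => hM'v e he hde
  obtain ⟨N, hN, hNc, hcase⟩ := HL1 hM hMc hM' hM'c hd hadj hin hwd
  rcases hcase with h | h
  · exact huD (mem_Dset_iff.mpr ⟨N, hN, hNc, not_msat_iff.mp h⟩)
  · exact hw (mem_Dset_iff.mpr ⟨N, hN, hNc, not_msat_iff.mp h⟩)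

/-- The vertex-deletion stability lemma. -/
lemma L4 (hu : u ∈ Aset G) {v : V} (hv : v ∉ Dset G) (hvu : v ≠ u) :
    ∀ M0, IsGMatching G M0 → M0.card + 1 = gnu G → ¬ msat M0 u → ¬ msat M0 v → False := by
  intro M0 hM0 hM0c h0u h0v
  obtain ⟨huD, d, hdD, hadj⟩ := hu
  have hvd : v ≠ d := fun h => hv (h ▸ hdD)
  obtain ⟨M', hM', hM'c, hM'v⟩ := mem_Dset_iff.mp hdD
  have hd : ¬ msat M' d := fun ⟨e, he, hde⟩ => hM'v e he hde
  obtain ⟨N, hN, hNle, hcase⟩ := HL2 hM0 hM' (by omega) h0u h0v hd hadj hvu hvd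
  have hNc : N.card = gnu G := le_antisymm (gmatch_le_gnu hN) (by omega)
  rcases hcase with h | h
  · exact huD (mem_Dset_iff.mpr ⟨N, hN, hNc, not_msat_iff.mp h⟩)
  · exact hv (mem_Dset_iff.mpr ⟨N, hN, hNc, not_msat_iff.mp h⟩)

variable (huw : u ≠ w)

lemma GP_adj {a b : V} :
    (G ⊔ fromEdgeSet {s(u, w)}).Adj a b ↔ G.Adj a b ∨ (s(a, b) = s(u, w) ∧ a ≠ b) := by
  simp [sup_adj, fromEdgeSet_adj]

lemma GM_adj {a b : V} :
    (G.deleteEdges {s(u, w)}).Adj a b ↔ G.Adj a b ∧ s(a, b) ≠ s(u, w) := by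
  simp [deleteEdges_adj]

lemma gmatch_GM {M : Finset (Sym2 V)} :
    IsGMatching (G.deleteEdges {s(u, w)}) M ↔ IsGMatching G M ∧ s(u, w) ∉ M := by
  constructor
  · intro h
    refine ⟨⟨fun e he => ?_, h.2⟩, fun hc => ?_⟩
    · have := h.1 e he
      rw [edgeSet_deleteEdges] at this
      exact this.1
    · have := h.1 _ hc
      rw [edgeSet_deleteEdges] at this
      exact this.2 rfl
  · rintro ⟨h, hc⟩
    refine ⟨fun e he => ?_, h.2⟩
    rw [edgeSet_deleteEdges]
    exact ⟨h.1 e he, fun hmem => hc (by rwa [Set.mem_singleton_iff.mp hmem] at he)⟩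

lemma gmatch_GP_of {M : Finset (Sym2 V)} (h : IsGMatching G M) :
    IsGMatching (G ⊔ fromEdgeSet {s(u, w)}) M :=
  ⟨fun e he => edgeSet_mono le_sup_left (h.1 e he), h.2⟩

lemma gmatch_of_GP {M : Finset (Sym2 V)} (h : IsGMatching (G ⊔ fromEdgeSet {s(u, w)}) M)
    (hc : s(u, w) ∉ M) : IsGMatching G M := by
  refine ⟨fun e he => ?_, h.2⟩
  have := h.1 e he
  rw [edgeSet_sup, edgeSet_fromEdgeSet] at this
  rcases this with h' | h'
  · exact h'
  · exact absurd (Set.mem_singleton_iff.mp h'.1 ▸ he) hc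

lemma gmatch_of_GP_erase {M : Finset (Sym2 V)} (h : IsGMatching (G ⊔ fromEdgeSet {s(u, w)}) M)
    (hc : s(u, w) ∈ M) :
    IsGMatching G (M.erase s(u, w)) ∧ ¬ msat (M.erase s(u, w)) u ∧
      ¬ msat (M.erase s(u, w)) w := by
  have hPM : PM M := h.2
  refine ⟨⟨fun e he => ?_, pm_mono h.2 (Finset.erase_subset _ _)⟩, ?_, ?_⟩
  · have := h.1 e (Finset.mem_of_mem_erase he)
    rw [edgeSet_sup, edgeSet_fromEdgeSet] at this
    rcases this with h' | h'
    · exact h'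
    · exact absurd (Set.mem_singleton_iff.mp h'.1) (Finset.mem_erase.mp he).1
  · rintro ⟨e, he, hue⟩
    exact (Finset.mem_erase.mp he).1
      (pm_eq hPM (Finset.mem_of_mem_erase he) hc hue (by simp))
  · rintro ⟨e, he, hwe⟩
    exact (Finset.mem_erase.mp he).1
      (pm_eq hPM (Finset.mem_of_mem_erase he) hc hwe (by simp))

lemma gnu_GP (hu : u ∈ Aset G) : gnu (G ⊔ fromEdgeSet {s(u, w)}) = gnu G := by
  refine le_antisymm ?_ (gnu_mono le_sup_left)
  obtain ⟨K, hK, hKc⟩ := gnu_exists (G ⊔ fromEdgeSet {s(u, w)})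
  by_cases huwK : s(u, w) ∈ K
  · obtain ⟨hKG, hKu, hKw⟩ := gmatch_of_GP_erase hK huwK
    have h1 : (K.erase s(u, w)).card + 1 = K.card := by
      rw [Finset.card_erase_of_mem huwK]
      have : 1 ≤ K.card := Finset.card_pos.mpr ⟨_, huwK⟩
      omega
    have h2 : (K.erase s(u, w)).card ≠ gnu G := by
      intro hc
      exact hu.1 (mem_Dset_iff.mpr ⟨_, hKG, hc, not_msat_iff.mp hKu⟩)
    have h3 : (K.erase s(u, w)).card ≤ gnu G := gmatch_le_gnu hKG
    omega
  · rw [← hKc]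
    exact gmatch_le_gnu (gmatch_of_GP hK huwK)

lemma gnu_GM (hu : u ∈ Aset G) (hw : w ∉ Dset G) :
    gnu (G.deleteEdges {s(u, w)}) = gnu G := by
  refine le_antisymm (gnu_mono (deleteEdges_le _)) ?_
  obtain ⟨M, hM, hMc⟩ := gnu_exists G
  have huwM : s(u, w) ∉ M := nomax hu hw M hM hMc
  rw [← hMc]
  exact gmatch_le_gnu (gmatch_GM.mpr ⟨hM, huwM⟩)

lemma delV_GP_endpoint (x : V) (hx : x = u ∨ x = w) :
    delV (G ⊔ fromEdgeSet {s(u, w)}) x = delV G x := by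
  ext a b
  show (G ⊔ fromEdgeSet {s(u, w)}).Adj a b ∧ a ≠ x ∧ b ≠ x ↔ G.Adj a b ∧ a ≠ x ∧ b ≠ x
  rw [GP_adj]
  constructor
  · rintro ⟨h | ⟨heq, hne⟩, ha, hb⟩
    · exact ⟨h, ha, hb⟩
    · exfalso
      rcases Sym2.eq_iff.mp heq with ⟨rfl, rfl⟩ | ⟨rfl, rfl⟩ <;>
        rcases hx with rfl | rfl <;> simp_all
  · rintro ⟨h, ha, hb⟩
    exact ⟨Or.inl h, ha, hb⟩

lemma delV_GM_endpoint (x : V) (hx : x = u ∨ x = w) :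
    delV (G.deleteEdges {s(u, w)}) x = delV G x := by
  ext a b
  show (G.deleteEdges {s(u, w)}).Adj a b ∧ a ≠ x ∧ b ≠ x ↔ G.Adj a b ∧ a ≠ x ∧ b ≠ x
  rw [GM_adj]
  constructor
  · rintro ⟨⟨h, -⟩, ha, hb⟩
    exact ⟨h, ha, hb⟩
  · rintro ⟨h, ha, hb⟩
    refine ⟨⟨h, fun heq => ?_⟩, ha, hb⟩
    rcases Sym2.eq_iff.mp heq with ⟨rfl, rfl⟩ | ⟨rfl, rfl⟩ <;>
      rcases hx with rfl | rfl <;> simp_all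

lemma mem_Dset_gnu {H : SimpleGraph V} {v : V} : v ∈ Dset H ↔ gnu (delV H v) = gnu H :=
  Iff.rfl

lemma Dset_GP (hu : u ∈ Aset G) (hw : w ∉ Dset G) :
    Dset (G ⊔ fromEdgeSet {s(u, w)}) = Dset G := by
  ext v
  by_cases hv : v = u ∨ v = w
  · rw [mem_Dset_gnu, mem_Dset_gnu, delV_GP_endpoint v hv, gnu_GP hu]
  · push_neg at hv
    constructor
    · intro hmem
      by_contra hvD
      obtain ⟨K, hK, hKc⟩ := gnu_exists (delV (G ⊔ fromEdgeSet {s(u, w)}) v)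
      obtain ⟨hK', hKv⟩ := gmatch_delV.mp hK
      have hKcard : K.card = gnu G := by
        rw [hKc, mem_Dset_gnu.mp hmem, gnu_GP hu]
      by_cases huwK : s(u, w) ∈ K
      · obtain ⟨hKG, hKu, hKw⟩ := gmatch_of_GP_erase hK' huwK
        have h1 : (K.erase s(u, w)).card + 1 = gnu G := by
          rw [Finset.card_erase_of_mem huwK]
          have : 1 ≤ K.card := Finset.card_pos.mpr ⟨_, huwK⟩
          omega
        have hKv' : ¬ msat (K.erase s(u, w)) v := fun ⟨e, he, hve⟩ =>
          hKv e (Finset.mem_of_mem_erase he) hve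
        exact L4 hu hvD hv.1 _ hKG h1 hKu hKv'
      · exact hvD (mem_Dset_iff.mpr ⟨K, gmatch_of_GP hK' huwK, hKcard, hKv⟩)
    · intro hvD
      rw [mem_Dset_gnu]
      refine le_antisymm (gnu_mono delV_le) ?_
      calc gnu (G ⊔ fromEdgeSet {s(u, w)}) = gnu G := gnu_GP hu
        _ = gnu (delV G v) := (mem_Dset_gnu.mp hvD).symm
        _ ≤ _ := gnu_mono (delV_mono le_sup_left v)

lemma Dset_GM (hu : u ∈ Aset G) (hw : w ∉ Dset G) :
    Dset (G.deleteEdges {s(u, w)}) = Dset G := by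
  ext v
  by_cases hv : v = u ∨ v = w
  · rw [mem_Dset_gnu, mem_Dset_gnu, delV_GM_endpoint v hv, gnu_GM hu hw]
  · constructor
    · intro hmem
      rw [mem_Dset_gnu]
      refine le_antisymm (gnu_mono delV_le) ?_
      calc gnu G = gnu (G.deleteEdges {s(u, w)}) := (gnu_GM hu hw).symm
        _ = gnu (delV (G.deleteEdges {s(u, w)}) v) := (mem_Dset_gnu.mp hmem).symm
        _ ≤ gnu (delV G v) := gnu_mono (delV_mono (deleteEdges_le _) v)
    · intro hvD
      obtain ⟨K, hK, hKc, hKv⟩ := mem_Dset_iff.mp hvD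
      have huwK : s(u, w) ∉ K := nomax hu hw K hK hKc
      rw [mem_Dset_gnu]
      refine le_antisymm (gnu_mono delV_le) ?_
      calc gnu (G.deleteEdges {s(u, w)}) = gnu G := gnu_GM hu hw
        _ = K.card := hKc.symm
        _ ≤ _ := gmatch_le_gnu (gmatch_delV.mpr ⟨gmatch_GM.mpr ⟨hK, huwK⟩, hKv⟩)

lemma adj_GP_iff (hu : u ∈ Aset G) (hw : w ∉ Dset G) {a b : V} (hb : b ∈ Dset G) :
    (G ⊔ fromEdgeSet {s(u, w)}).Adj a b ↔ G.Adj a b := by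
  rw [GP_adj]
  constructor
  · rintro (h | ⟨heq, -⟩)
    · exact h
    · exfalso
      rcases Sym2.eq_iff.mp heq with ⟨rfl, rfl⟩ | ⟨rfl, rfl⟩
      · exact hw hb
      · exact hu.1 hb
  · exact Or.inl

lemma adj_GM_iff (hu : u ∈ Aset G) (hw : w ∉ Dset G) {a b : V} (hb : b ∈ Dset G) :
    (G.deleteEdges {s(u, w)}).Adj a b ↔ G.Adj a b := by
  rw [GM_adj]
  constructor
  · exact And.left
  · intro h
    refine ⟨h, fun heq => ?_⟩
    rcases Sym2.eq_iff.mp heq with ⟨rfl, rfl⟩ | ⟨rfl, rfl⟩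
    · exact hw hb
    · exact hu.1 hb

lemma main (G : SimpleGraph V) (u w : V) (hu : u ∈ Aset G) (hw : w ∉ Dset G) :
    ∀ G' ∈ ({G ⊔ SimpleGraph.fromEdgeSet {s(u, w)},
             G.deleteEdges {s(u, w)}} : Set (SimpleGraph V)),
      Dset G' = Dset G ∧ Aset G' = Aset G ∧ Cset G' = Cset G ∧
      ∀ x y, reachOn G' (Dset G') x y ↔ reachOn G (Dset G) x y := by
  intro G' hG'
  have hGadj : Dset G' = Dset G ∧ ∀ a b : V, b ∈ Dset G → (G'.Adj a b ↔ G.Adj a b) := by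
    rcases Set.mem_insert_iff.mp hG' with rfl | hG''
    · exact ⟨Dset_GP hu hw, fun a b hb => adj_GP_iff hu hw hb⟩
    · rw [Set.mem_singleton_iff.mp hG'']
      exact ⟨Dset_GM hu hw, fun a b hb => adj_GM_iff hu hw hb⟩
  obtain ⟨hD, hadj⟩ := hGadj
  have hA : Aset G' = Aset G := by
    ext x
    simp only [Aset, Set.mem_setOf_eq, hD]
    constructor
    · rintro ⟨hx, d, hd, hxd⟩
      exact ⟨hx, d, hd, (hadj x d hd).mp hxd⟩
    · rintro ⟨hx, d, hd, hxd⟩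
      exact ⟨hx, d, hd, (hadj x d hd).mpr hxd⟩
  have hC : Cset G' = Cset G := by
    unfold Cset
    rw [hD, hA]
  refine ⟨hD, hA, hC, ?_⟩
  intro x y
  rw [hD]
  unfold reachOn
  constructor
  · exact Relation.ReflTransGen.mono (fun a b (⟨h1, h2, h3⟩ : G'.Adj a b ∧ a ∈ Dset G ∧ b ∈ Dset G) =>
      (⟨(hadj a b h3).mp h1, h2, h3⟩ : G.Adj a b ∧ a ∈ Dset G ∧ b ∈ Dset G)) x y
  · exact Relation.ReflTransGen.mono (fun a b (⟨h1, h2, h3⟩ : G.Adj a b ∧ a ∈ Dset G ∧ b ∈ Dset G) =>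
      (⟨(hadj a b h3).mpr h1, h2, h3⟩ : G'.Adj a b ∧ a ∈ Dset G ∧ b ∈ Dset G)) x y

end Main

end GEaux


/-- If both endpoints of `e = s(u,w)` lie in `A`, or one in `A` and one in `C`, then `G + e`
and `G - e` have the same Gallai–Edmonds decomposition as `G`: the same sets `D`, `A`, `C`,
and the same connected components of the induced subgraph on `D`. -/
theorem same_GE_of_edge_in_A_or_AC {V : Type} [Fintype V] [DecidableEq V]
    (G : SimpleGraph V) (u w : V) (huw : u ≠ w)
    (h : (u ∈ Aset G ∧ w ∈ Aset G) ∨ (u ∈ Aset G ∧ w ∈ Cset G) ∨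
         (u ∈ Cset G ∧ w ∈ Aset G)) :
    ∀ G' ∈ ({G ⊔ SimpleGraph.fromEdgeSet {s(u, w)},
             G.deleteEdges {s(u, w)}} : Set (SimpleGraph V)),
      Dset G' = Dset G ∧ Aset G' = Aset G ∧ Cset G' = Cset G ∧
      ∀ x y, reachOn G' (Dset G') x y ↔ reachOn G (Dset G) x y := by
  have hCnotD : ∀ x : V, x ∈ Cset G → x ∉ Dset G :=
    fun x hx hD => hx (Set.mem_union_left _ hD)
  rcases h with ⟨hu, hwA⟩ | ⟨hu, hwC⟩ | ⟨huC, hwA⟩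
  · exact GEaux.main G u w hu hwA.1
  · exact GEaux.main G u w hu (hCnotD w hwC)
  · have := GEaux.main G w u hwA (hCnotD u huC)
    rwa [Sym2.eq_swap] at this
end

section
/- Let G₁ ⊆ G₂ be graphs on the same vertex set with ν(G₁) = ν(G₂). Then D(G₁) ⊆ D(G₂) and D(G₁) ∪ A(G₁) ⊆ D(G₂) ∪ A(G₂), where D(G) = {v : ν(G - v) = ν(G)} and A(G) = N_G(D(G)). -/
attribute [local instance] Classical.propDecidable

variable {V : Type} [Fintype V] [DecidableEq V]

lemma gnu_mono {V : Type} [Fintype V] [DecidableEq V] {G₁ G₂ : SimpleGraph V}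
    (hle : G₁ ≤ G₂) : gnu G₁ ≤ gnu G₂ := by
  apply Finset.sup_le
  intro M hM
  simp only [Finset.mem_filter, Finset.mem_powerset] at hM
  apply Finset.le_sup (f := Finset.card)
  simp only [Finset.mem_filter, Finset.mem_powerset]
  exact ⟨hM.1, fun e he => SimpleGraph.edgeSet_mono hle (hM.2.1 e he), hM.2.2⟩

lemma delV_le {V : Type} [Fintype V] [DecidableEq V] (G : SimpleGraph V) (v : V) :
    delV G v ≤ G := fun _ _ h => h.1

lemma delV_mono {V : Type} [Fintype V] [DecidableEq V] {G₁ G₂ : SimpleGraph V}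
    (hle : G₁ ≤ G₂) (v : V) : delV G₁ v ≤ delV G₂ v :=
  fun _ _ h => ⟨hle h.1, h.2⟩

/-- If `G₁ ⊆ G₂` have the same vertex set and the same matching number, then
`D(G₁) ⊆ D(G₂)` and `D(G₁) ∪ A(G₁) ⊆ D(G₂) ∪ A(G₂)`. -/
theorem Dset_mono_of_nu_eq {V : Type} [Fintype V] [DecidableEq V]
    (G₁ G₂ : SimpleGraph V) (hle : G₁ ≤ G₂) (hnu : gnu G₁ = gnu G₂) :
    Dset G₁ ⊆ Dset G₂ ∧ Dset G₁ ∪ Aset G₁ ⊆ Dset G₂ ∪ Aset G₂ := by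
  have hD : Dset G₁ ⊆ Dset G₂ := by
    intro v hv
    have h1 : gnu (delV G₁ v) = gnu G₁ := hv
    have h2 : gnu (delV G₁ v) ≤ gnu (delV G₂ v) := gnu_mono (delV_mono hle v)
    have h3 : gnu (delV G₂ v) ≤ gnu G₂ := gnu_mono (delV_le G₂ v)
    exact le_antisymm h3 (by omega)
  refine ⟨hD, ?_⟩
  rintro v (hv | hv)
  · exact Or.inl (hD hv)
  · by_cases hv2 : v ∈ Dset G₂
    · exact Or.inl hv2
    · obtain ⟨hvD, d, hd, hadj⟩ := hv
      exact Or.inr ⟨hv2, d, hD hd, hle hadj⟩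
end

section
/- Let K be a simplicial complex on vertex set V such that for every non-empty face σ ∈ K, the link lk_K(σ) has vanishing reduced homology in all dimensions ≥ d₀. Then for any vertex v of K, the induced subcomplex K - v (on V \ {v}) also has this property: for every non-empty face σ of K - v, the link lk_{K-v}(σ) has vanishing reduced homology in all dimensions ≥ d₀. -/
attribute [local instance] Classical.propDecidable

variable {W : Type} [LinearOrder W] (F : Type) [Field F]

/-- The simplicial boundary operator on formal `F`-linear combinations of finite sets
(faces `s` of cardinality `n` being generators in degree `n`; the empty face is the
generator of the augmentation degree, so this computes *reduced* homology). -/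
noncomputable def bdry (x : Finset W →₀ F) : Finset W →₀ F :=
  x.sum fun s a =>
    ∑ v ∈ s, (a * (-1 : F) ^ (s.filter fun w => w < v).card) • Finsupp.single (s.erase v) (1 : F)

/-- `K` is an (abstract, finite) simplicial complex: a hereditary family of finite sets. -/
def IsComplex (K : Finset (Finset W)) : Prop := ∀ s ∈ K, ∀ t ⊆ s, t ∈ K

/-- The reduced homology (with coefficients in `F`) of the complex `K` vanishes in
dimension `d`: every reduced `d`-cycle of `K` is a boundary of a `(d+1)`-chain of `K`.
(A face of dimension `d` has cardinality `d + 1`.) -/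
def VanishesAt (K : Finset (Finset W)) (d : ℕ) : Prop :=
  ∀ x : Finset W →₀ F, (∀ s ∈ x.support, s ∈ K ∧ s.card = d + 1) → bdry F x = 0 →
    ∃ y : Finset W →₀ F, (∀ s ∈ y.support, s ∈ K ∧ s.card = d + 2) ∧ bdry F y = x

/-- The link of a face `σ` in the complex `K`. -/
noncomputable def linkOf (K : Finset (Finset W)) (σ : Finset W) : Finset (Finset W) :=
  K.filter fun τ => Disjoint τ σ ∧ τ ∪ σ ∈ K

noncomputable def sg (s : Finset W) (w : W) : F := (-1 : F) ^ (s.filter fun u => u < w).card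

lemma sg_mul_self (s : Finset W) (w : W) : sg F s w * sg F s w = 1 := by
  simp [sg, ← pow_add, ← two_mul, pow_mul]

lemma sg_ne_zero (s : Finset W) (w : W) : sg F s w ≠ 0 := by
  intro h
  have h2 := sg_mul_self F s w
  rw [h, zero_mul] at h2
  exact zero_ne_one h2

lemma bdry_single (s : Finset W) (a : F) :
    bdry F (Finsupp.single s a) = ∑ w ∈ s, (a * sg F s w) • Finsupp.single (s.erase w) (1:F) := by
  unfold bdry sg
  rw [Finsupp.sum_single_index]
  simp

lemma bdry_zero : bdry F (0 : Finset W →₀ F) = 0 := by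
  unfold bdry; exact Finsupp.sum_zero_index

lemma bdry_add (x y : Finset W →₀ F) : bdry F (x + y) = bdry F x + bdry F y := by
  unfold bdry
  rw [Finsupp.sum_add_index]
  · intro a _; simp
  · intro a _ b c; simp [add_mul, add_smul, Finset.sum_add_distrib]

lemma support_bdry (x : Finset W →₀ F) (u : Finset W) (hu : u ∈ (bdry F x).support) :
    ∃ s ∈ x.support, ∃ w ∈ s, u = s.erase w := by
  have h1 := Finsupp.support_sum hu
  rw [Finset.mem_biUnion] at h1
  obtain ⟨s, hs, hu2⟩ := h1
  refine ⟨s, hs, ?_⟩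
  have h2 := Finsupp.support_finset_sum hu2
  rw [Finset.mem_biUnion] at h2
  obtain ⟨w, hw, hu3⟩ := h2
  refine ⟨w, hw, ?_⟩
  have h3 := Finsupp.support_smul hu3
  have h4 := Finsupp.support_single_subset h3
  simpa using h4

noncomputable def cone (v : W) (x : Finset W →₀ F) : Finset W →₀ F :=
  x.sum fun s a => (sg F s v * a) • Finsupp.single (insert v s) (1:F)

lemma cone_zero (v : W) : cone F v (0 : Finset W →₀ F) = 0 := Finsupp.sum_zero_index

lemma cone_single (v : W) (s : Finset W) (a : F) :
    cone F v (Finsupp.single s a) = (sg F s v * a) • Finsupp.single (insert v s) (1:F) := by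
  unfold cone
  rw [Finsupp.sum_single_index]
  simp

lemma cone_add (v : W) (x y : Finset W →₀ F) :
    cone F v (x + y) = cone F v x + cone F v y := by
  unfold cone
  rw [Finsupp.sum_add_index]
  · intro a _; simp
  · intro a _ b c; simp [mul_add, add_smul]

lemma cone_sum {ι : Type*} (v : W) (t : Finset ι) (g : ι → (Finset W →₀ F)) :
    cone F v (∑ i ∈ t, g i) = ∑ i ∈ t, cone F v (g i) := by
  classical
  induction t using Finset.cons_induction with
  | empty => simp [cone_zero]
  | cons i t hi ih => rw [Finset.sum_cons, cone_add, ih, Finset.sum_cons]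

lemma support_cone (v : W) (x : Finset W →₀ F) (u : Finset W) (hu : u ∈ (cone F v x).support) :
    v ∈ u := by
  have h1 := Finsupp.support_sum hu
  rw [Finset.mem_biUnion] at h1
  obtain ⟨s, _, hu2⟩ := h1
  have h3 := Finsupp.support_smul hu2
  have h4 := Finsupp.support_single_subset h3
  simp only [Finset.mem_singleton] at h4
  rw [h4]; exact Finset.mem_insert_self v s

lemma cone_apply_not_mem (v : W) (x : Finset W →₀ F) (u : Finset W) (hu : v ∉ u) :
    cone F v x u = 0 := by
  by_contra hne
  exact hu (support_cone F v x u (Finsupp.mem_support_iff.mpr hne))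

lemma cone_apply_insert (v : W) (x : Finset W →₀ F) (hx : ∀ s ∈ x.support, v ∉ s)
    (t : Finset W) (ht : v ∉ t) :
    cone F v x (insert v t) = sg F t v * x t := by
  unfold cone
  rw [Finsupp.sum_apply]
  rw [Finsupp.sum]
  have : ∀ s ∈ x.support,
      ((sg F s v * x s) • Finsupp.single (insert v s) (1:F)) (insert v t)
        = if s = t then sg F t v * x t else 0 := by
    intro s hs
    rw [Finsupp.smul_apply, Finsupp.single_apply]
    by_cases hst : s = t
    · subst hst; simp
    · have : insert v s ≠ insert v t := by
        intro hh
        apply hst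
        have := congrArg (Finset.erase · v) hh
        simpa [Finset.erase_insert (hx s hs), Finset.erase_insert ht] using this
      simp [this, hst]
  rw [Finset.sum_congr rfl this, Finset.sum_ite_eq' x.support t]
  by_cases hmem : t ∈ x.support
  · simp [hmem]
  · rw [Finsupp.notMem_support_iff] at hmem
    simp [hmem]

lemma sg_key (v w : W) (s : Finset W) (hv : v ∉ s) (hw : w ∈ s) :
    sg F s v * sg F (insert v s) w = - (sg F (s.erase w) v * sg F s w) := by
  have hvw : v ≠ w := fun h => hv (h ▸ hw)
  unfold sg
  rw [Finset.filter_insert, Finset.filter_erase]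
  rcases lt_or_gt_of_ne hvw with hlt | hgt
  · rw [if_pos hlt]
    have hvn : v ∉ s.filter (fun u => u < w) := fun h => hv (Finset.mem_filter.mp h).1
    rw [Finset.card_insert_of_notMem hvn, pow_succ]
    have hwn : w ∉ s.filter (fun u => u < v) := by
      intro h
      exact absurd (Finset.mem_filter.mp h).2 (not_lt.mpr hlt.le)
    rw [Finset.erase_eq_of_notMem hwn]
    ring
  · rw [if_neg (not_lt.mpr hgt.le)]
    have hwm : w ∈ s.filter (fun u => u < v) := Finset.mem_filter.mpr ⟨hw, hgt⟩
    rw [Finset.card_erase_of_mem hwm]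
    have hpos : (s.filter (fun u => u < v)).card ≠ 0 := by
      intro h
      rw [Finset.card_eq_zero] at h
      rw [h] at hwm
      exact absurd hwm (Finset.notMem_empty w)
    obtain ⟨k, hk⟩ := Nat.exists_eq_succ_of_ne_zero hpos
    rw [hk]
    simp only [Nat.succ_sub_one, pow_succ]
    ring


lemma bdry_cone_single (v : W) (s : Finset W) (a : F) (hv : v ∉ s) :
    bdry F (cone F v (Finsupp.single s a)) =
      Finsupp.single s a - cone F v (bdry F (Finsupp.single s a)) := by
  rw [cone_single, bdry_single, Finsupp.smul_single', mul_one, bdry_single,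
    Finset.sum_insert hv, cone_sum]
  have hterm1 : (sg F s v * a * sg F (insert v s) v) • Finsupp.single ((insert v s).erase v) (1:F)
      = Finsupp.single s a := by
    have h1 : sg F (insert v s) v = sg F s v := by
      unfold sg
      rw [Finset.filter_insert, if_neg (lt_irrefl v)]
    rw [h1, Finset.erase_insert hv]
    have : sg F s v * a * sg F s v = a := by
      have := sg_mul_self F s v
      calc sg F s v * a * sg F s v = (sg F s v * sg F s v) * a := by ring
        _ = a := by rw [this, one_mul]
    rw [this, Finsupp.smul_single', mul_one]
  rw [hterm1]
  have hterm2 : ∀ w ∈ s,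
      (sg F s v * a * sg F (insert v s) w) • Finsupp.single ((insert v s).erase w) (1:F)
        = - cone F v ((a * sg F s w) • Finsupp.single (s.erase w) (1:F)) := by
    intro w hw
    have hvw : v ≠ w := fun h => hv (h ▸ hw)
    have harg : (a * sg F s w) • Finsupp.single (s.erase w) (1:F)
        = Finsupp.single (s.erase w) (a * sg F s w) := by
      rw [Finsupp.smul_single', mul_one]
    rw [harg, cone_single, Finset.erase_insert_of_ne hvw, ← neg_smul]
    congr 1
    have := sg_key F v w s hv hw
    calc sg F s v * a * sg F (insert v s) w = a * (sg F s v * sg F (insert v s) w) := by ring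
      _ = a * (- (sg F (s.erase w) v * sg F s w)) := by rw [this]
      _ = -(sg F (s.erase w) v * (a * sg F s w)) := by ring
  rw [Finset.sum_congr rfl hterm2, Finset.sum_neg_distrib]
  abel

lemma bdry_cone (v : W) (x : Finset W →₀ F) (hx : ∀ s ∈ x.support, v ∉ s) :
    bdry F (cone F v x) = x - cone F v (bdry F x) := by
  induction x using Finsupp.induction with
  | zero => simp [cone_zero, bdry_zero]
  | single_add s a f hs ha ih =>
    have hmem : ∀ t ∈ f.support, t ∈ (Finsupp.single s a + f).support := by
      intro t ht
      have hts : t ≠ s := fun h => hs (h ▸ ht)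
      rw [Finsupp.mem_support_iff] at ht ⊢
      rw [Finsupp.add_apply, Finsupp.single_apply, if_neg (Ne.symm hts), zero_add]
      exact ht
    have hsv : v ∉ s := by
      apply hx s
      rw [Finsupp.mem_support_iff, Finsupp.add_apply, Finsupp.single_apply, if_pos rfl,
        Finsupp.notMem_support_iff.mp hs, add_zero]
      exact ha
    have ihx := ih (fun t ht => hx t (hmem t ht))
    rw [cone_add, bdry_add, bdry_add, cone_add, ihx, bdry_cone_single F v s a hsv]
    abel

noncomputable def uncone (v : W) (y : Finset W →₀ F) : Finset W →₀ F :=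
  y.sum fun s a =>
    if v ∈ s then (sg F (s.erase v) v * a) • Finsupp.single (s.erase v) (1:F) else 0

lemma support_uncone (v : W) (y : Finset W →₀ F) (t : Finset W)
    (ht : t ∈ (uncone F v y).support) : v ∉ t ∧ insert v t ∈ y.support := by
  have h1 := Finsupp.support_sum ht
  rw [Finset.mem_biUnion] at h1
  obtain ⟨s, hs, ht2⟩ := h1
  by_cases hvs : v ∈ s
  · rw [if_pos hvs] at ht2
    have h3 := Finsupp.support_single_subset (Finsupp.support_smul ht2)
    simp only [Finset.mem_singleton] at h3
    subst h3
    exact ⟨Finset.notMem_erase v s, by rwa [Finset.insert_erase hvs]⟩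
  · rw [if_neg hvs] at ht2
    simp at ht2

lemma insert_erase_ne (v : W) (s t : Finset W) (hvs : v ∈ s) (hse : ¬ s = insert v t) :
    s.erase v ≠ t := by
  intro hh
  apply hse
  rw [← hh]
  exact (Finset.insert_erase hvs).symm

lemma sum_ite_eq_support (g : Finset W → F) (y : Finset W →₀ F) (u : Finset W) :
    (∑ s ∈ y.support, if s = u then g s * y s else 0) = g u * y u := by
  rw [Finset.sum_ite_eq' y.support u (fun s => g s * y s)]
  by_cases hmem : u ∈ y.support
  · simp only [hmem, if_true]
  · rw [Finsupp.notMem_support_iff] at hmem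
    simp [hmem]

lemma uncone_apply (v : W) (y : Finset W →₀ F) (t : Finset W) (ht : v ∉ t) :
    uncone F v y t = sg F t v * y (insert v t) := by
  unfold uncone
  rw [Finsupp.sum_apply, Finsupp.sum]
  have key : ∀ s ∈ y.support,
      (if v ∈ s then (sg F (s.erase v) v * y s) • Finsupp.single (s.erase v) (1:F) else 0) t
        = if s = insert v t then sg F t v * y s else 0 := by
    intro s _
    split_ifs with h1 h2 h2
    · subst h2
      rw [Finsupp.smul_apply, Finset.erase_insert ht, Finsupp.single_apply, if_pos rfl]
      simp
    · have hnt : s.erase v ≠ t := insert_erase_ne v s t h1 h2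
      rw [Finsupp.smul_apply, Finsupp.single_apply, if_neg hnt]
      simp
    · rw [h2] at h1
      exact absurd (Finset.mem_insert_self v t) h1
    · simp
  rw [Finset.sum_congr rfl key]
  exact sum_ite_eq_support F (fun _ => sg F t v) y (insert v t)

lemma cone_uncone_apply (v : W) (y : Finset W →₀ F) (u : Finset W) (hu : v ∈ u) :
    cone F v (uncone F v y) u = y u := by
  have hne : v ∉ u.erase v := Finset.notMem_erase v u
  have hrw : u = insert v (u.erase v) := (Finset.insert_erase hu).symm
  rw [hrw, cone_apply_insert F v _ (fun t ht => (support_uncone F v y t ht).1) _ hne,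
    uncone_apply F v y _ hne, ← mul_assoc, sg_mul_self, one_mul]

/-- If every link of a non-empty face of `K` has vanishing reduced homology in all
dimensions `≥ d₀`, then the same holds for the induced subcomplex `K - v`
obtained by deleting a vertex `v`. -/
theorem link_vanishing_hereditary {W : Type} [LinearOrder W] (F : Type) [Field F]
    (K : Finset (Finset W)) (hK : IsComplex K) (d₀ : ℕ)
    (h : ∀ σ ∈ K, σ ≠ ∅ → ∀ d, d₀ ≤ d → VanishesAt F (linkOf K σ) d)
    (v : W) :
    ∀ σ ∈ K.filter fun s => v ∉ s, σ ≠ (∅ : Finset W) →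
      ∀ d, d₀ ≤ d → VanishesAt F (linkOf (K.filter fun s => v ∉ s) σ) d := by
  intro σ hσf hσne d hd x hx hcyc
  rw [Finset.mem_filter] at hσf
  obtain ⟨hσK, hvσ⟩ := hσf
  have hxK : ∀ s ∈ x.support, s ∈ linkOf K σ ∧ s.card = d + 1 := by
    intro s hs
    obtain ⟨hsL, hcard⟩ := hx s hs
    simp only [linkOf, Finset.mem_filter] at hsL ⊢
    exact ⟨⟨hsL.1.1, hsL.2.1, hsL.2.2.1⟩, hcard⟩
  have hxv : ∀ s ∈ x.support, v ∉ s := by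
    intro s hs
    obtain ⟨hsL, _⟩ := hx s hs
    simp only [linkOf, Finset.mem_filter] at hsL
    exact hsL.1.2
  obtain ⟨y, hy, hby⟩ := h σ hσK hσne d hd x hxK hcyc
  set z := uncone F v y with hzdef
  have hzv : ∀ t ∈ z.support, v ∉ t := fun t ht => (support_uncone F v y t ht).1
  have hzy : ∀ t ∈ z.support, insert v t ∈ y.support := fun t ht => (support_uncone F v y t ht).2
  set y₀ := y - cone F v z with hy0def
  have hy0v : ∀ u, v ∈ u → y₀ u = 0 := by
    intro u hu
    rw [hy0def, Finsupp.sub_apply, cone_uncone_apply F v y u hu, sub_self]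
  have hy0supp : ∀ u ∈ y₀.support, u ∈ y.support ∧ v ∉ u := by
    intro u hu
    rw [Finsupp.mem_support_iff] at hu
    have hvu : v ∉ u := fun hvm => hu (hy0v u hvm)
    refine ⟨?_, hvu⟩
    rw [Finsupp.mem_support_iff]
    intro h0
    apply hu
    simp [hy0def, Finsupp.sub_apply, h0, cone_apply_not_mem F v z u hvu]
  have hmain : x = bdry F y₀ + z - cone F v (bdry F z) := by
    have hysplit : y = y₀ + cone F v z := by rw [hy0def]; abel
    rw [← hby, hysplit, bdry_add, bdry_cone F v z hzv]
    abel
  by_cases hz0 : z = 0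
  · refine ⟨y₀, ?_, ?_⟩
    · intro u hu
      obtain ⟨huy, hvu⟩ := hy0supp u hu
      obtain ⟨huL, hucard⟩ := hy u huy
      simp only [linkOf, Finset.mem_filter] at huL ⊢
      have hvuσ : v ∉ u ∪ σ := by
        intro hm; rcases Finset.mem_union.mp hm with hh | hh
        exacts [hvu hh, hvσ hh]
      exact ⟨⟨⟨huL.1, hvu⟩, huL.2.1, huL.2.2, hvuσ⟩, hucard⟩
    · rw [hmain, hz0, bdry_zero, cone_zero]
      simp
  · obtain ⟨t₀, ht₀⟩ := Finsupp.support_nonempty_iff.mpr hz0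
    have hσv : insert v σ ∈ K := by
      obtain ⟨hL, _⟩ := hy _ (hzy t₀ ht₀)
      simp only [linkOf, Finset.mem_filter] at hL
      apply hK _ hL.2.2
      intro a ha
      rcases Finset.mem_insert.mp ha with rfl | haσ
      · exact Finset.mem_union_left σ (Finset.mem_insert_self a t₀)
      · exact Finset.mem_union_right _ haσ
    have hbz_supp : ∀ u ∈ (bdry F z).support, v ∉ u := by
      intro u hu
      obtain ⟨s, hs, w, _, rfl⟩ := support_bdry F z u hu
      exact fun hm => hzv s hs (Finset.mem_of_mem_erase hm)
    have hby0_supp : ∀ u ∈ (bdry F y₀).support, v ∉ u := by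
      intro u hu
      obtain ⟨s, hs, w, _, rfl⟩ := support_bdry F y₀ u hu
      exact fun hm => (hy0supp s hs).2 (Finset.mem_of_mem_erase hm)
    have hbz : bdry F z = 0 := by
      ext u
      rw [Finsupp.zero_apply]
      by_cases hvu : v ∈ u
      · by_contra hne
        exact hbz_supp u (Finsupp.mem_support_iff.mpr hne) hvu
      · have heval := congrArg (fun q : Finset W →₀ F => q (insert v u)) hmain
        simp only [Finsupp.sub_apply, Finsupp.add_apply] at heval
        have h1 : x (insert v u) = 0 := by
          rw [← Finsupp.notMem_support_iff]
          intro hmem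
          exact hxv _ hmem (Finset.mem_insert_self v u)
        have h2 : bdry F y₀ (insert v u) = 0 := by
          rw [← Finsupp.notMem_support_iff]
          intro hmem
          exact hby0_supp _ hmem (Finset.mem_insert_self v u)
        have h3 : z (insert v u) = 0 := by
          rw [← Finsupp.notMem_support_iff]
          intro hmem
          exact hzv _ hmem (Finset.mem_insert_self v u)
        have h4 : cone F v (bdry F z) (insert v u) = sg F u v * bdry F z u :=
          cone_apply_insert F v _ hbz_supp u hvu
        rw [h1, h2, h3, h4] at heval
        have h5 : sg F u v * bdry F z u = 0 := by
          simpa using heval.symm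
        rcases mul_eq_zero.mp h5 with hc | hc
        · exact absurd hc (sg_ne_zero F u v)
        · exact hc
    have hmain2 : x = bdry F y₀ + z := by
      have := hmain
      rw [hbz, cone_zero, sub_zero] at this
      exact this
    have hzK : ∀ t ∈ z.support, t ∈ linkOf K (insert v σ) ∧ t.card = d + 1 := by
      intro t ht
      obtain ⟨hL, hcard⟩ := hy _ (hzy t ht)
      simp only [linkOf, Finset.mem_filter] at hL ⊢
      have hvt : v ∉ t := hzv t ht
      have htsub : t ⊆ insert v t := Finset.subset_insert v t
      refine ⟨⟨hK _ hL.1 t htsub, ?_, ?_⟩, ?_⟩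
      · rw [Finset.disjoint_insert_right]
        exact ⟨hvt, Finset.disjoint_of_subset_left htsub hL.2.1⟩
      · have hun : t ∪ insert v σ = insert v t ∪ σ := by
          ext a
          simp only [Finset.mem_union, Finset.mem_insert]
          tauto
        rw [hun]
        exact hL.2.2
      · have hc2 := hcard
        rw [Finset.card_insert_of_notMem hvt] at hc2
        omega
    have hne : insert v σ ≠ (∅ : Finset W) := by
      intro hcon
      have hm := Finset.mem_insert_self v σ
      rw [hcon] at hm
      exact absurd hm (Finset.notMem_empty v)
    obtain ⟨w, hw, hbw⟩ := h (insert v σ) hσv hne d hd z hzK hbz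
    refine ⟨y₀ + w, ?_, ?_⟩
    · intro u hu
      have hu2 := Finset.mem_of_subset Finsupp.support_add hu
      rw [Finset.mem_union] at hu2
      rcases hu2 with hu1 | hu1
      · obtain ⟨huy, hvu⟩ := hy0supp u hu1
        obtain ⟨hL, hc⟩ := hy u huy
        simp only [linkOf, Finset.mem_filter] at hL ⊢
        have hvuσ : v ∉ u ∪ σ := by
          intro hm; rcases Finset.mem_union.mp hm with hh | hh
          exacts [hvu hh, hvσ hh]
        exact ⟨⟨⟨hL.1, hvu⟩, hL.2.1, hL.2.2, hvuσ⟩, hc⟩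
      · obtain ⟨hL, hc⟩ := hw u hu1
        simp only [linkOf, Finset.mem_filter] at hL ⊢
        have hdis := hL.2.1
        rw [Finset.disjoint_insert_right] at hdis
        have hvu : v ∉ u := hdis.1
        have hvuσ : v ∉ u ∪ σ := by
          intro hm; rcases Finset.mem_union.mp hm with hh | hh
          exacts [hvu hh, hvσ hh]
        have hsub : u ∪ σ ⊆ u ∪ insert v σ :=
          Finset.union_subset_union_right (Finset.subset_insert v σ)
        exact ⟨⟨⟨hL.1, hvu⟩, hdis.2, hK _ hL.2.2 _ hsub, hvuσ⟩, hc⟩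
    · rw [bdry_add, hbw, ← hmain2]
end
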